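/- (Algebraic content of Corollary 3) Suppose there exists a matrix B₁ ∈ ℝ^{K×J} such that x_i = B₁ w_i for all i. Then: (a) V_xw γ̃ = V_xτ, where γ̃ = V_ww⁻¹ V_wτ; equivalently, under complete randomization, Cov(τ̂_x, τ̂ − γ̃ᵀτ̂_w) = 0; and (b) V_ττ − V_τx V_xx⁻¹ V_xτ = (V_ττ − V_τw V_ww⁻¹ V_wτ) + γ̃ᵀ (V_ww − V_wx V_xx⁻¹ V_xw) γ̃. Part (a) expresses R²_proj = 1 and γ̃_proj = γ̃_res = γ̃, and part (b) expresses R²_res = (R²_{τ,w} − R²_{τ,x})/(1 − R²_{τ,x}) in Corollary 3. -/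

import Mathlib

open Finset Matrix

noncomputable section

/-- The set of possible complete-randomization treatment assignments:
subsets of `{1,…,n}` of size `n₁` (the treated units). -/
def Omega (n n₁ : ℕ) : Finset (Finset (Fin n)) :=
  Finset.powersetCard n₁ Finset.univ

/-- Expectation under complete randomization (uniform over `Omega n n₁`). -/
def crE (n n₁ : ℕ) (f : Finset (Fin n) → ℝ) : ℝ :=
  (∑ s ∈ Omega n n₁, f s) / ((Omega n n₁).card : ℝ)

/-- Variance under complete randomization. -/
def crVar (n n₁ : ℕ) (f : Finset (Fin n) → ℝ) : ℝ :=
  crE n n₁ fun s => (f s - crE n n₁ f) ^ 2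

/-- Covariance under complete randomization. -/
def crCov (n n₁ : ℕ) (f g : Finset (Fin n) → ℝ) : ℝ :=
  crE n n₁ fun s => (f s - crE n n₁ f) * (g s - crE n n₁ g)

/-- Difference-in-means estimator `τ̂` of the average treatment effect. -/
def tauHat (n n₁ n₀ : ℕ) (Y1 Y0 : Fin n → ℝ) (s : Finset (Fin n)) : ℝ :=
  (n₁ : ℝ)⁻¹ * ∑ i, (if i ∈ s then Y1 i else 0)
    - (n₀ : ℝ)⁻¹ * ∑ i, (if i ∈ s then 0 else Y0 i)

/-- Difference-in-means `τ̂_w` of a covariate vector. -/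
def tauHatVec (n n₁ n₀ J : ℕ) (w : Fin n → Fin J → ℝ) (s : Finset (Fin n)) :
    Fin J → ℝ := fun j =>
  (n₁ : ℝ)⁻¹ * ∑ i, (if i ∈ s then w i j else 0)
    - (n₀ : ℝ)⁻¹ * ∑ i, (if i ∈ s then 0 else w i j)

/-- Finite-population mean. -/
def popMean (n : ℕ) (Y : Fin n → ℝ) : ℝ := (n : ℝ)⁻¹ * ∑ i, Y i

/-- Finite-population variance `S²_Y`. -/
def popVar (n : ℕ) (Y : Fin n → ℝ) : ℝ :=
  ((n : ℝ) - 1)⁻¹ * ∑ i, (Y i - popMean n Y) ^ 2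

/-- Finite-population covariance `S_{w,Y}` between centered covariates and an outcome. -/
def covVec (n J : ℕ) (w : Fin n → Fin J → ℝ) (Y : Fin n → ℝ) : Fin J → ℝ := fun j =>
  ((n : ℝ) - 1)⁻¹ * ∑ i, w i j * (Y i - popMean n Y)

/-- Finite-population covariance matrix `S_{w,x}` between two sets of centered covariates. -/
def covMat (n J K : ℕ) (w : Fin n → Fin J → ℝ) (x : Fin n → Fin K → ℝ) :
    Matrix (Fin J) (Fin K) ℝ :=
  Matrix.of fun j k => ((n : ℝ) - 1)⁻¹ * ∑ i, w i j * x i k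

/-- `V_ττ = r₁⁻¹ S²_{Y(1)} + r₀⁻¹ S²_{Y(0)} − S²_τ`. -/
def Vtt (n n₁ n₀ : ℕ) (Y1 Y0 : Fin n → ℝ) : ℝ :=
  ((n₁ : ℝ) / n)⁻¹ * popVar n Y1 + ((n₀ : ℝ) / n)⁻¹ * popVar n Y0
    - popVar n (fun i => Y1 i - Y0 i)

/-- `V_wτ = r₁⁻¹ S_{w,Y(1)} + r₀⁻¹ S_{w,Y(0)}`. -/
def VvecTau (n n₁ n₀ J : ℕ) (w : Fin n → Fin J → ℝ) (Y1 Y0 : Fin n → ℝ) :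
    Fin J → ℝ :=
  ((n₁ : ℝ) / n)⁻¹ • covVec n J w Y1 + ((n₀ : ℝ) / n)⁻¹ • covVec n J w Y0

/-- `V_wx = (r₁ r₀)⁻¹ S_{w,x}` (covariance blocks of the matrix `V`). -/
def Vmat (n n₁ n₀ J K : ℕ) (w : Fin n → Fin J → ℝ) (x : Fin n → Fin K → ℝ) :
    Matrix (Fin J) (Fin K) ℝ :=
  (((n₁ : ℝ) / n) * ((n₀ : ℝ) / n))⁻¹ • covMat n J K w x


section Aux

/-! ### Counting lemmas -/

lemma count_one (n n₁ : ℕ) (hn₁ : 1 ≤ n₁) (i : Fin n) :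
    ((Omega n n₁).filter (fun s => i ∈ s)).card = (n-1).choose (n₁-1) := by
  have h : ((Omega n n₁).filter (fun s => i ∈ s)).card
      = (Finset.powersetCard (n₁-1) (Finset.univ.erase i)).card := by
    apply Finset.card_nbij' (fun s => s.erase i) (fun t => insert i t)
    · intro s hs
      simp only [Omega, Finset.mem_coe, Finset.mem_filter, Finset.mem_powersetCard] at hs
      simp only [Finset.mem_coe, Finset.mem_powersetCard]
      refine ⟨fun a ha => ?_, ?_⟩
      · simp only [Finset.mem_erase] at ha ⊢
        exact ⟨ha.1, Finset.mem_univ _⟩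
      · rw [Finset.card_erase_of_mem hs.2, hs.1.2]
    · intro t ht
      simp only [Finset.mem_coe, Finset.mem_powersetCard] at ht
      have hit : i ∉ t := fun h => (Finset.mem_erase.mp (ht.1 h)).1 rfl
      simp only [Omega, Finset.mem_coe, Finset.mem_filter, Finset.mem_powersetCard]
      refine ⟨⟨Finset.subset_univ _, ?_⟩, Finset.mem_insert_self _ _⟩
      rw [Finset.card_insert_of_notMem hit, ht.2]
      omega
    · intro s hs
      simp only [Omega, Finset.mem_coe, Finset.mem_filter] at hs
      exact Finset.insert_erase hs.2
    · intro t ht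
      simp only [Finset.mem_coe, Finset.mem_powersetCard] at ht
      have hit : i ∉ t := fun h => (Finset.mem_erase.mp (ht.1 h)).1 rfl
      exact Finset.erase_insert hit
  rw [h, Finset.card_powersetCard, Finset.card_erase_of_mem (Finset.mem_univ i),
    Finset.card_univ, Fintype.card_fin]

lemma count_two (n n₁ : ℕ) (hn₁ : 2 ≤ n₁) (i j : Fin n) (hij : i ≠ j) :
    ((Omega n n₁).filter (fun s => i ∈ s ∧ j ∈ s)).card = (n-2).choose (n₁-2) := by
  have h : ((Omega n n₁).filter (fun s => i ∈ s ∧ j ∈ s)).card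
      = (Finset.powersetCard (n₁-2) ((Finset.univ.erase i).erase j)).card := by
    apply Finset.card_nbij' (fun s => (s.erase i).erase j) (fun t => insert i (insert j t))
    · intro s hs
      simp only [Omega, Finset.mem_coe, Finset.mem_filter, Finset.mem_powersetCard] at hs
      simp only [Finset.mem_coe, Finset.mem_powersetCard]
      refine ⟨fun a ha => ?_, ?_⟩
      · simp only [Finset.mem_erase] at ha ⊢
        exact ⟨ha.1, ha.2.1, Finset.mem_univ _⟩
      · rw [Finset.card_erase_of_mem (Finset.mem_erase.mpr ⟨hij.symm, hs.2.2⟩),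
          Finset.card_erase_of_mem hs.2.1, hs.1.2]
        omega
    · intro t ht
      simp only [Finset.mem_coe, Finset.mem_powersetCard] at ht
      have hjt : j ∉ t := fun h => (Finset.mem_erase.mp (ht.1 h)).1 rfl
      have hit : i ∉ t := fun h => (Finset.mem_erase.mp (Finset.mem_erase.mp (ht.1 h)).2).1 rfl
      have hii : i ∉ insert j t := by
        simp only [Finset.mem_insert]
        rintro (h | h)
        · exact hij h
        · exact hit h
      simp only [Omega, Finset.mem_coe, Finset.mem_filter, Finset.mem_powersetCard]
      refine ⟨⟨Finset.subset_univ _, ?_⟩, Finset.mem_insert_self _ _,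
        Finset.mem_insert_of_mem (Finset.mem_insert_self _ _)⟩
      rw [Finset.card_insert_of_notMem hii, Finset.card_insert_of_notMem hjt, ht.2]
      omega
    · intro s hs
      simp only [Omega, Finset.mem_coe, Finset.mem_filter] at hs
      beta_reduce
      rw [Finset.insert_erase (Finset.mem_erase.mpr ⟨hij.symm, hs.2.2⟩),
        Finset.insert_erase hs.2.1]
    · intro t ht
      simp only [Finset.mem_coe, Finset.mem_powersetCard] at ht
      have hjt : j ∉ t := fun h => (Finset.mem_erase.mp (ht.1 h)).1 rfl
      have hit : i ∉ t := fun h => (Finset.mem_erase.mp (Finset.mem_erase.mp (ht.1 h)).2).1 rfl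
      have hii : i ∉ insert j t := by
        simp only [Finset.mem_insert]
        rintro (h | h)
        · exact hij h
        · exact hit h
      beta_reduce
      rw [Finset.erase_insert hii, Finset.erase_insert hjt]
  rw [h, Finset.card_powersetCard,
    Finset.card_erase_of_mem (Finset.mem_erase.mpr ⟨hij.symm, Finset.mem_univ _⟩),
    Finset.card_erase_of_mem (Finset.mem_univ i), Finset.card_univ, Fintype.card_fin,
    show n - 1 - 1 = n - 2 by omega]

lemma count_two_one (n n₁ : ℕ) (hn₁ : n₁ = 1) (i j : Fin n) (hij : i ≠ j) :
    ((Omega n n₁).filter (fun s => i ∈ s ∧ j ∈ s)).card = 0 := by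
  rw [Finset.card_eq_zero, Finset.filter_eq_empty_iff]
  intro s hs
  simp only [Omega, Finset.mem_powersetCard] at hs
  rintro ⟨hi, hj⟩
  have hsub : ({i, j} : Finset (Fin n)) ⊆ s := by
    intro a ha
    simp only [Finset.mem_insert, Finset.mem_singleton] at ha
    rcases ha with rfl | rfl <;> assumption
  have h2 := Finset.card_le_card hsub
  rw [Finset.card_pair hij, hs.2, hn₁] at h2
  omega

/-! ### Combinatorial expectation lemmas -/

lemma sum_ind (n n₁ : ℕ) (hn₁ : 1 ≤ n₁) (b : Fin n → ℝ) :
    ∑ s ∈ Omega n n₁, (∑ i, if i ∈ s then b i else 0)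
      = ((n-1).choose (n₁-1) : ℝ) * ∑ i, b i := by
  rw [Finset.sum_comm, Finset.mul_sum]
  refine Finset.sum_congr rfl fun i _ => ?_
  rw [← Finset.sum_filter, Finset.sum_const, count_one n n₁ hn₁ i]
  simp [mul_comm]

lemma sum_ind_mul (n n₁ : ℕ) (hn₁ : 1 ≤ n₁) (a b : Fin n → ℝ)
    (hb : ∑ i, b i = 0) (hab : ∑ i, a i * b i = 0) :
    ∑ s ∈ Omega n n₁, (∑ i, if i ∈ s then b i else 0) * (∑ i, if i ∈ s then a i else 0)
      = 0 := by
  set N2 : ℝ := if n₁ = 1 then 0 else ((n-2).choose (n₁-2) : ℝ) with hN2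
  have key : ∀ i j : Fin n, i ≠ j →
      ((((Omega n n₁).filter (fun s => i ∈ s ∧ j ∈ s)).card : ℝ)) = N2 := by
    intro i j hij
    rcases eq_or_lt_of_le hn₁ with h1 | h2
    · rw [count_two_one n n₁ h1.symm i j hij, hN2, if_pos h1.symm]
      simp
    · rw [count_two n n₁ h2 i j hij, hN2, if_neg (by omega)]
  have expand : ∀ s ∈ Omega n n₁,
      (∑ i, if i ∈ s then b i else 0) * (∑ i, if i ∈ s then a i else 0)
      = ∑ i, ∑ j, (if i ∈ s ∧ j ∈ s then b i * a j else 0) := by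
    intro s _
    rw [Finset.sum_mul]
    refine Finset.sum_congr rfl fun i _ => ?_
    rw [Finset.mul_sum]
    refine Finset.sum_congr rfl fun j _ => ?_
    by_cases hi : i ∈ s <;> by_cases hj : j ∈ s <;> simp [hi, hj]
  rw [Finset.sum_congr rfl expand, Finset.sum_comm]
  have hInner : ∀ i : Fin n, ∑ s ∈ Omega n n₁, ∑ j, (if i ∈ s ∧ j ∈ s then b i * a j else 0)
      = ∑ j, (((Omega n n₁).filter (fun s => i ∈ s ∧ j ∈ s)).card : ℝ) * (b i * a j) := by
    intro i
    rw [Finset.sum_comm]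
    refine Finset.sum_congr rfl fun j _ => ?_
    rw [← Finset.sum_filter, Finset.sum_const, nsmul_eq_mul]
  rw [Finset.sum_congr rfl fun i _ => hInner i]
  have split : ∀ i : Fin n,
      ∑ j, (((Omega n n₁).filter (fun s => i ∈ s ∧ j ∈ s)).card : ℝ) * (b i * a j)
      = (((n-1).choose (n₁-1) : ℝ) - N2) * (b i * a i) + N2 * (b i * ∑ j, a j) := by
    intro i
    have term : ∀ j : Fin n,
        (((Omega n n₁).filter (fun s => i ∈ s ∧ j ∈ s)).card : ℝ) * (b i * a j)
        = (if j = i then (((n-1).choose (n₁-1) : ℝ) - N2) * (b i * a i) else 0)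
          + N2 * (b i * a j) := by
      intro j
      by_cases hji : j = i
      · subst hji
        rw [if_pos rfl]
        have heq : ((Omega n n₁).filter (fun s => j ∈ s ∧ j ∈ s))
            = ((Omega n n₁).filter (fun s => j ∈ s)) := by
          apply Finset.filter_congr
          intro s _
          simp
        rw [heq, count_one n n₁ hn₁ j]
        ring
      · rw [key i j (Ne.symm hji), if_neg hji, zero_add]
    rw [Finset.sum_congr rfl (fun j _ => term j), Finset.sum_add_distrib]
    congr 1
    · simp
    · rw [← Finset.mul_sum, ← Finset.mul_sum]
  rw [Finset.sum_congr rfl (fun i _ => split i), Finset.sum_add_distrib,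
    ← Finset.mul_sum, ← Finset.mul_sum]
  have h1 : ∑ i, b i * a i = 0 := by
    rw [← hab]
    exact Finset.sum_congr rfl fun i _ => mul_comm _ _
  have h2 : ∑ i, b i * ∑ j, a j = (∑ i, b i) * ∑ j, a j := by
    rw [Finset.sum_mul]
  rw [h1, h2, hb]
  ring

lemma crCov_zero (n n₁ : ℕ) (hn₁ : 1 ≤ n₁) (a b : Fin n → ℝ) (c : ℝ)
    (hb : ∑ i, b i = 0) (hab : ∑ i, a i * b i = 0) :
    crCov n n₁ (fun s => ∑ i, if i ∈ s then b i else 0)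
      (fun s => (∑ i, if i ∈ s then a i else 0) + c) = 0 := by
  have hf : ∑ s ∈ Omega n n₁, (∑ i, if i ∈ s then b i else 0) = 0 := by
    rw [sum_ind n n₁ hn₁ b, hb, mul_zero]
  have hEf : crE n n₁ (fun s => ∑ i, if i ∈ s then b i else 0) = 0 := by
    rw [crE, hf, zero_div]
  rw [crCov, hEf, crE]
  set μ := crE n n₁ (fun s => (∑ i, if i ∈ s then a i else 0) + c) with hμ
  have hnum : ∑ s ∈ Omega n n₁, ((∑ i, if i ∈ s then b i else 0) - 0) *
      (((∑ i, if i ∈ s then a i else 0) + c) - μ) = 0 := by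
    have hterm : ∀ s : Finset (Fin n), ((∑ i, if i ∈ s then b i else 0) - 0) *
        (((∑ i, if i ∈ s then a i else 0) + c) - μ)
        = (∑ i, if i ∈ s then b i else 0) * (∑ i, if i ∈ s then a i else 0)
          + (c - μ) * (∑ i, if i ∈ s then b i else 0) := by
      intro s; ring
    rw [Finset.sum_congr rfl (fun s _ => hterm s), Finset.sum_add_distrib,
      sum_ind_mul n n₁ hn₁ a b hb hab, ← Finset.mul_sum, hf, mul_zero, add_zero]
  rw [hnum, zero_div]

/-! ### Matrix structure lemmas -/

lemma covMat_symm {n J : ℕ} {w : Fin n → Fin J → ℝ} :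
    (covMat n J J w w)ᵀ = covMat n J J w w := by
  ext j j'
  simp only [covMat, Matrix.transpose_apply, Matrix.of_apply]
  congr 1
  exact Finset.sum_congr rfl fun i _ => mul_comm _ _

lemma xiK {n J K : ℕ} {w : Fin n → Fin J → ℝ} {x : Fin n → Fin K → ℝ}
    {B₁ : Matrix (Fin K) (Fin J) ℝ} (hB : ∀ i, x i = B₁ *ᵥ w i) (i : Fin n) (k : Fin K) :
    x i k = ∑ j, B₁ k j * w i j := by
  rw [hB i]
  rfl

lemma covMat_wx {n J K : ℕ} {w : Fin n → Fin J → ℝ} {x : Fin n → Fin K → ℝ}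
    {B₁ : Matrix (Fin K) (Fin J) ℝ} (hB : ∀ i, x i = B₁ *ᵥ w i) :
    covMat n J K w x = covMat n J J w w * B₁ᵀ := by
  ext j k
  simp only [covMat, Matrix.mul_apply, Matrix.of_apply, Matrix.transpose_apply]
  have hterm : ∀ i, w i j * x i k = ∑ j', w i j * w i j' * B₁ k j' := by
    intro i
    rw [xiK hB, Finset.mul_sum]
    exact Finset.sum_congr rfl fun j' _ => by ring
  rw [Finset.sum_congr rfl (fun i _ => hterm i), Finset.sum_comm, Finset.mul_sum]
  refine Finset.sum_congr rfl fun j' _ => ?_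
  rw [← Finset.sum_mul]
  ring

lemma covMat_xwx {n J K : ℕ} {w : Fin n → Fin J → ℝ} {x : Fin n → Fin K → ℝ}
    {B₁ : Matrix (Fin K) (Fin J) ℝ} (hB : ∀ i, x i = B₁ *ᵥ w i) :
    covMat n K K x x = B₁ * covMat n J K w x := by
  ext k k'
  simp only [covMat, Matrix.mul_apply, Matrix.of_apply]
  have hterm : ∀ i, x i k * x i k' = ∑ j, B₁ k j * (w i j * x i k') := by
    intro i
    rw [xiK hB, Finset.sum_mul]
    exact Finset.sum_congr rfl fun j _ => by ring
  rw [Finset.sum_congr rfl (fun i _ => hterm i), Finset.sum_comm, Finset.mul_sum]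
  refine Finset.sum_congr rfl fun j _ => ?_
  rw [← Finset.mul_sum]
  ring

lemma covMat_xx {n J K : ℕ} {w : Fin n → Fin J → ℝ} {x : Fin n → Fin K → ℝ}
    {B₁ : Matrix (Fin K) (Fin J) ℝ} (hB : ∀ i, x i = B₁ *ᵥ w i) :
    covMat n K K x x = B₁ * covMat n J J w w * B₁ᵀ := by
  rw [covMat_xwx hB, covMat_wx hB, ← Matrix.mul_assoc]

lemma covVec_x {n J K : ℕ} {w : Fin n → Fin J → ℝ} {x : Fin n → Fin K → ℝ}
    {B₁ : Matrix (Fin K) (Fin J) ℝ} (hB : ∀ i, x i = B₁ *ᵥ w i) (Y : Fin n → ℝ) :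
    covVec n K x Y = B₁ *ᵥ covVec n J w Y := by
  ext k
  simp only [covVec, Matrix.mulVec, dotProduct]
  have hterm : ∀ i, x i k * (Y i - popMean n Y)
      = ∑ j, B₁ k j * (w i j * (Y i - popMean n Y)) := by
    intro i
    rw [xiK hB, Finset.sum_mul]
    exact Finset.sum_congr rfl fun j _ => by ring
  rw [Finset.sum_congr rfl (fun i _ => hterm i), Finset.sum_comm, Finset.mul_sum]
  refine Finset.sum_congr rfl fun j _ => ?_
  rw [← Finset.mul_sum]
  ring

/-! ### Abstract linear-algebra cores -/

lemma dot_mulVec_t {J K : ℕ} (A : Matrix (Fin J) (Fin K) ℝ) (u : Fin J → ℝ) (z : Fin K → ℝ) :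
    u ⬝ᵥ (A *ᵥ z) = (Aᵀ *ᵥ u) ⬝ᵥ z := by
  rw [Matrix.dotProduct_mulVec, Matrix.mulVec_transpose]

lemma parta_core {J K : ℕ} (W : Matrix (Fin J) (Fin J) ℝ) (hWs : Wᵀ = W) (hW : IsUnit W.det)
    (B : Matrix (Fin K) (Fin J) ℝ) (v : Fin J → ℝ) :
    (W * Bᵀ)ᵀ *ᵥ (W⁻¹ *ᵥ v) = B *ᵥ v := by
  rw [Matrix.transpose_mul, Matrix.transpose_transpose, hWs, Matrix.mulVec_mulVec,
    Matrix.mul_assoc, Matrix.mul_nonsing_inv W hW, Matrix.mul_one]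

lemma partb_core {J K : ℕ} (W : Matrix (Fin J) (Fin J) ℝ) (hWs : Wᵀ = W) (hW : IsUnit W.det)
    (B : Matrix (Fin K) (Fin J) ℝ) (v : Fin J → ℝ) :
    (W⁻¹ *ᵥ v) ⬝ᵥ ((W - (W * Bᵀ) * (B * W * Bᵀ)⁻¹ * (W * Bᵀ)ᵀ) *ᵥ (W⁻¹ *ᵥ v))
      = v ⬝ᵥ (W⁻¹ *ᵥ v) - (B *ᵥ v) ⬝ᵥ ((B * W * Bᵀ)⁻¹ *ᵥ (B *ᵥ v)) := by
  set γ := W⁻¹ *ᵥ v with hγ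
  set M := B * W * Bᵀ with hMdef
  have hWγ : W *ᵥ γ = v := by
    rw [hγ, Matrix.mulVec_mulVec, Matrix.mul_nonsing_inv W hW, Matrix.one_mulVec]
  rw [Matrix.sub_mulVec, dotProduct_sub]
  have hBWγ : (B * W) *ᵥ γ = B *ᵥ v := by rw [← Matrix.mulVec_mulVec, hWγ]
  have hT : (W * Bᵀ)ᵀ = B * W := by
    rw [Matrix.transpose_mul, Matrix.transpose_transpose, hWs]
  have t1 : γ ⬝ᵥ (W *ᵥ γ) = v ⬝ᵥ γ := by rw [hWγ, dotProduct_comm]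
  have t2 : γ ⬝ᵥ ((W * Bᵀ * M⁻¹ * (W * Bᵀ)ᵀ) *ᵥ γ) = (B *ᵥ v) ⬝ᵥ (M⁻¹ *ᵥ (B *ᵥ v)) := by
    rw [hT, ← Matrix.mulVec_mulVec, hBWγ, ← Matrix.mulVec_mulVec, dot_mulVec_t, hT, hBWγ]
  rw [t1, t2]

/-! ### Indicator rewriting helpers -/

lemma ite_not_sum {n : ℕ} (s : Finset (Fin n)) (f : Fin n → ℝ) :
    ∑ i, (if i ∈ s then (0:ℝ) else f i) = ∑ i, f i - ∑ i, (if i ∈ s then f i else 0) := by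
  rw [← Finset.sum_sub_distrib]
  refine Finset.sum_congr rfl fun i _ => ?_
  by_cases h : i ∈ s <;> simp [h]

lemma sum_ite_smul {n : ℕ} (s : Finset (Fin n)) (c : ℝ) (f : Fin n → ℝ) :
    ∑ i, (if i ∈ s then c * f i else 0) = c * ∑ i, (if i ∈ s then f i else 0) := by
  rw [Finset.mul_sum]
  refine Finset.sum_congr rfl fun i _ => ?_
  by_cases h : i ∈ s <;> simp [h]

lemma sum_ite_add {n : ℕ} (s : Finset (Fin n)) (f g : Fin n → ℝ) :
    ∑ i, (if i ∈ s then f i + g i else 0)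
      = (∑ i, (if i ∈ s then f i else 0)) + ∑ i, (if i ∈ s then g i else 0) := by
  rw [← Finset.sum_add_distrib]
  refine Finset.sum_congr rfl fun i _ => ?_
  by_cases h : i ∈ s <;> simp [h]

lemma sum_ite_sub {n : ℕ} (s : Finset (Fin n)) (f g : Fin n → ℝ) :
    ∑ i, (if i ∈ s then f i - g i else 0)
      = (∑ i, (if i ∈ s then f i else 0)) - ∑ i, (if i ∈ s then g i else 0) := by
  rw [← Finset.sum_sub_distrib]
  refine Finset.sum_congr rfl fun i _ => ?_
  by_cases h : i ∈ s <;> simp [h]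

end Aux

/-- algebraic content of Corollary 3: if `x_i = B₁ w_i` for all `i`,
then (a) `V_xw γ̃ = V_xτ`, equivalently `Cov(τ̂_x, τ̂ − γ̃ᵀτ̂_w) = 0`, and
(b) `V_ττ − V_τx V_xx⁻¹ V_xτ
    = (V_ττ − V_τw V_ww⁻¹ V_wτ) + γ̃ᵀ(V_ww − V_wx V_xx⁻¹ V_xw)γ̃`. -/
theorem statement11 (n n₁ n₀ J K : ℕ) (hn : 2 ≤ n) (hn₁ : 1 ≤ n₁) (hn₀ : 1 ≤ n₀)
    (hsum : n₁ + n₀ = n) (Y1 Y0 : Fin n → ℝ) (w : Fin n → Fin J → ℝ)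
    (x : Fin n → Fin K → ℝ) (hw : ∀ j, ∑ i, w i j = 0) (hx : ∀ k, ∑ i, x i k = 0)
    (hSw : IsUnit (covMat n J J w w).det) (hSx : IsUnit (covMat n K K x x).det)
    (B₁ : Matrix (Fin K) (Fin J) ℝ) (hB : ∀ i, x i = B₁ *ᵥ w i)
    (γt : Fin J → ℝ)
    (hγt : γt = (Vmat n n₁ n₀ J J w w)⁻¹ *ᵥ VvecTau n n₁ n₀ J w Y1 Y0) :
    ((Vmat n n₁ n₀ J K w x)ᵀ *ᵥ γt = VvecTau n n₁ n₀ K x Y1 Y0) ∧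
      (∀ k, crCov n n₁ (fun s => tauHatVec n n₁ n₀ K x s k)
          (fun s => tauHat n n₁ n₀ Y1 Y0 s - γt ⬝ᵥ tauHatVec n n₁ n₀ J w s) = 0) ∧
      Vtt n n₁ n₀ Y1 Y0 - VvecTau n n₁ n₀ K x Y1 Y0 ⬝ᵥ
          ((Vmat n n₁ n₀ K K x x)⁻¹ *ᵥ VvecTau n n₁ n₀ K x Y1 Y0)
        = (Vtt n n₁ n₀ Y1 Y0 - VvecTau n n₁ n₀ J w Y1 Y0 ⬝ᵥ
              ((Vmat n n₁ n₀ J J w w)⁻¹ *ᵥ VvecTau n n₁ n₀ J w Y1 Y0))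
          + γt ⬝ᵥ ((Vmat n n₁ n₀ J J w w -
              Vmat n n₁ n₀ J K w x * (Vmat n n₁ n₀ K K x x)⁻¹ *
                (Vmat n n₁ n₀ J K w x)ᵀ) *ᵥ γt) := by
  -- basic numeric facts
  have hnR : (n:ℝ) ≠ 0 := Nat.cast_ne_zero.mpr (by omega)
  have hn1R : (n₁:ℝ) ≠ 0 := Nat.cast_ne_zero.mpr (by omega)
  have hn0R : (n₀:ℝ) ≠ 0 := Nat.cast_ne_zero.mpr (by omega)
  have hsumR : (n₁:ℝ) + (n₀:ℝ) = (n:ℝ) := by exact_mod_cast congrArg (Nat.cast : ℕ → ℝ) hsum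
  have hnm1 : ((n:ℝ) - 1) ≠ 0 := by
    have : (2:ℝ) ≤ (n:ℝ) := by exact_mod_cast hn
    linarith
  have hr1 : ((n₁:ℝ)/n) ≠ 0 := div_ne_zero hn1R hnR
  have hr0 : ((n₀:ℝ)/n) ≠ 0 := div_ne_zero hn0R hnR
  have hcV : (((n₁:ℝ)/n) * ((n₀:ℝ)/n))⁻¹ ≠ 0 := inv_ne_zero (mul_ne_zero hr1 hr0)
  -- matrix abbreviations
  set W := Vmat n n₁ n₀ J J w w with hWdef
  set v := VvecTau n n₁ n₀ J w Y1 Y0 with hvdef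
  have hWs : Wᵀ = W := by rw [hWdef, Vmat, Matrix.transpose_smul, covMat_symm]
  have hWdet : IsUnit W.det := by
    rw [hWdef, Vmat, Matrix.det_smul, isUnit_iff_ne_zero]
    exact mul_ne_zero (pow_ne_zero _ hcV) (isUnit_iff_ne_zero.mp hSw)
  have hVwx : Vmat n n₁ n₀ J K w x = W * B₁ᵀ := by
    rw [hWdef, Vmat, Vmat, covMat_wx hB, Matrix.smul_mul]
  have hVxx : Vmat n n₁ n₀ K K x x = B₁ * W * B₁ᵀ := by
    rw [hWdef, Vmat, Vmat, covMat_xx hB, Matrix.mul_smul, Matrix.smul_mul]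
  have hMdet : IsUnit (B₁ * W * B₁ᵀ).det := by
    rw [← hVxx, Vmat, Matrix.det_smul, isUnit_iff_ne_zero]
    exact mul_ne_zero (pow_ne_zero _ hcV) (isUnit_iff_ne_zero.mp hSx)
  have hvx : VvecTau n n₁ n₀ K x Y1 Y0 = B₁ *ᵥ v := by
    rw [hvdef, VvecTau, VvecTau, covVec_x hB, covVec_x hB, Matrix.mulVec_add,
      Matrix.mulVec_smul, Matrix.mulVec_smul]
  have hγ : γt = W⁻¹ *ᵥ v := hγt
  -- Part (a), matrix form
  have partA : (Vmat n n₁ n₀ J K w x)ᵀ *ᵥ γt = VvecTau n n₁ n₀ K x Y1 Y0 := by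
    rw [hVwx, hvx, hγ]
    exact parta_core W hWs hWdet B₁ v
  refine ⟨partA, ?_, ?_⟩
  · -- Part (a), covariance form
    intro k
    set c₁ : ℝ := (n₁:ℝ)⁻¹ + (n₀:ℝ)⁻¹ with hc₁
    have hfeq : (fun s => tauHatVec n n₁ n₀ K x s k)
        = (fun s : Finset (Fin n) => ∑ i, if i ∈ s then c₁ * x i k else 0) := by
      funext s
      simp only [tauHatVec]
      rw [ite_not_sum s (fun i => x i k), hx k, zero_sub, sum_ite_smul]
      ring
    have hgeq : (fun s => tauHat n n₁ n₀ Y1 Y0 s - γt ⬝ᵥ tauHatVec n n₁ n₀ J w s)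
        = (fun s : Finset (Fin n) =>
            (∑ i, if i ∈ s then (n₁:ℝ)⁻¹ * Y1 i + (n₀:ℝ)⁻¹ * Y0 i
              - c₁ * (∑ j, γt j * w i j) else 0) + (-((n₀:ℝ)⁻¹ * ∑ i, Y0 i))) := by
      funext s
      simp only [tauHat, tauHatVec, dotProduct]
      rw [ite_not_sum s Y0]
      have hj : ∀ j : Fin J, γt j * ((n₁:ℝ)⁻¹ * (∑ i, if i ∈ s then w i j else 0)
          - (n₀:ℝ)⁻¹ * (∑ i, if i ∈ s then (0:ℝ) else w i j))
          = c₁ * ∑ i, (if i ∈ s then γt j * w i j else 0) := by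
        intro j
        rw [ite_not_sum s (fun i => w i j), hw j, zero_sub, sum_ite_smul, hc₁]
        ring
      rw [Finset.sum_congr rfl (fun j _ => hj j), ← Finset.mul_sum, Finset.sum_comm]
      have hswap : ∑ i, ∑ j, (if i ∈ s then γt j * w i j else 0)
          = ∑ i, (if i ∈ s then (∑ j, γt j * w i j) else 0) := by
        refine Finset.sum_congr rfl fun i _ => ?_
        by_cases h : i ∈ s <;> simp [h]
      rw [hswap, sum_ite_sub s (fun i => (n₁:ℝ)⁻¹ * Y1 i + (n₀:ℝ)⁻¹ * Y0 i)
        (fun i => c₁ * (∑ j, γt j * w i j)),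
        sum_ite_add s (fun i => (n₁:ℝ)⁻¹ * Y1 i) (fun i => (n₀:ℝ)⁻¹ * Y0 i),
        sum_ite_smul s ((n₁:ℝ)⁻¹) Y1, sum_ite_smul s ((n₀:ℝ)⁻¹) Y0,
        sum_ite_smul s c₁ (fun i => ∑ j, γt j * w i j)]
      ring
    rw [hfeq, hgeq]
    -- verify the hypotheses of `crCov_zero`
    have hb : ∑ i, c₁ * x i k = 0 := by
      rw [← Finset.mul_sum, hx k, mul_zero]
    have hab : ∑ i, ((n₁:ℝ)⁻¹ * Y1 i + (n₀:ℝ)⁻¹ * Y0 i - c₁ * (∑ j, γt j * w i j))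
        * (c₁ * x i k) = 0 := by
      have expand : ∑ i, ((n₁:ℝ)⁻¹ * Y1 i + (n₀:ℝ)⁻¹ * Y0 i
          - c₁ * (∑ j, γt j * w i j)) * (c₁ * x i k)
          = c₁ * ((n₁:ℝ)⁻¹ * (∑ i, x i k * Y1 i) + (n₀:ℝ)⁻¹ * (∑ i, x i k * Y0 i)
              - c₁ * (∑ i, x i k * (∑ j, γt j * w i j))) := by
        calc ∑ i, ((n₁:ℝ)⁻¹ * Y1 i + (n₀:ℝ)⁻¹ * Y0 i
              - c₁ * (∑ j, γt j * w i j)) * (c₁ * x i k)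
            = ∑ i, (c₁ * ((n₁:ℝ)⁻¹ * (x i k * Y1 i))
                + (c₁ * ((n₀:ℝ)⁻¹ * (x i k * Y0 i))
                  - c₁ * (c₁ * (x i k * (∑ j, γt j * w i j))))) :=
              Finset.sum_congr rfl fun i _ => by ring
          _ = c₁ * ((n₁:ℝ)⁻¹ * (∑ i, x i k * Y1 i))
                + (c₁ * ((n₀:ℝ)⁻¹ * (∑ i, x i k * Y0 i))
                  - c₁ * (c₁ * (∑ i, x i k * (∑ j, γt j * w i j)))) := by
              rw [Finset.sum_add_distrib, Finset.sum_sub_distrib, ← Finset.mul_sum,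
                ← Finset.mul_sum, ← Finset.mul_sum, ← Finset.mul_sum, ← Finset.mul_sum,
                ← Finset.mul_sum]
          _ = c₁ * ((n₁:ℝ)⁻¹ * (∑ i, x i k * Y1 i) + (n₀:ℝ)⁻¹ * (∑ i, x i k * Y0 i)
              - c₁ * (∑ i, x i k * (∑ j, γt j * w i j))) := by ring
      rw [expand]
      -- derive the atomic identity from part (a) at coordinate k
      have hAk := congrFun partA k
      simp only [Vmat, VvecTau, covMat, covVec, Matrix.mulVec, Matrix.transpose_apply,
        dotProduct, Matrix.smul_apply, Pi.add_apply, Pi.smul_apply, smul_eq_mul,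
        Matrix.of_apply] at hAk
      have hPmean : ∑ i, x i k * (Y1 i - popMean n Y1) = ∑ i, x i k * Y1 i := by
        rw [Finset.sum_congr rfl (fun i (_ : i ∈ Finset.univ) =>
          mul_sub (x i k) (Y1 i) (popMean n Y1)), Finset.sum_sub_distrib,
          ← Finset.sum_mul, hx k, zero_mul, sub_zero]
      have hQmean : ∑ i, x i k * (Y0 i - popMean n Y0) = ∑ i, x i k * Y0 i := by
        rw [Finset.sum_congr rfl (fun i (_ : i ∈ Finset.univ) =>
          mul_sub (x i k) (Y0 i) (popMean n Y0)), Finset.sum_sub_distrib,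
          ← Finset.sum_mul, hx k, zero_mul, sub_zero]
      have hAswap : ∑ j, (((n₁:ℝ)/n) * ((n₀:ℝ)/n))⁻¹
            * (((n:ℝ) - 1)⁻¹ * ∑ i, w i j * x i k) * γt j
          = (((n₁:ℝ)/n) * ((n₀:ℝ)/n))⁻¹ * ((n:ℝ) - 1)⁻¹
            * ∑ i, x i k * (∑ j, γt j * w i j) := by
        have hterm : ∀ j : Fin J, (((n₁:ℝ)/n) * ((n₀:ℝ)/n))⁻¹
            * (((n:ℝ) - 1)⁻¹ * ∑ i, w i j * x i k) * γt j
            = ∑ i, (((n₁:ℝ)/n) * ((n₀:ℝ)/n))⁻¹ * ((n:ℝ) - 1)⁻¹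
              * (γt j * (w i j * x i k)) := by
          intro j
          rw [show (((n₁:ℝ)/n) * ((n₀:ℝ)/n))⁻¹
              * (((n:ℝ) - 1)⁻¹ * ∑ i, w i j * x i k) * γt j
              = ((((n₁:ℝ)/n) * ((n₀:ℝ)/n))⁻¹ * ((n:ℝ) - 1)⁻¹ * γt j)
                * ∑ i, w i j * x i k from by ring, Finset.mul_sum]
          exact Finset.sum_congr rfl fun i _ => by ring
        rw [Finset.sum_congr rfl (fun j _ => hterm j), Finset.sum_comm, Finset.mul_sum]
        refine Finset.sum_congr rfl fun i _ => ?_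
        rw [Finset.mul_sum, Finset.mul_sum]
        refine Finset.sum_congr rfl fun j _ => ?_
        ring
      rw [hAswap, hPmean, hQmean] at hAk
      set P : ℝ := ∑ i, x i k * Y1 i
      set Q : ℝ := ∑ i, x i k * Y0 i
      set A : ℝ := ∑ i, x i k * (∑ j, γt j * w i j)
      have hkey : (n₁:ℝ)⁻¹ * P + (n₀:ℝ)⁻¹ * Q - c₁ * A = 0 := by
        field_simp at hAk
        have hc : (n:ℝ) * n₁ * n₀ * ((n:ℝ)-1)^2 ≠ 0 :=
          mul_ne_zero (mul_ne_zero (mul_ne_zero hnR hn1R) hn0R) (pow_ne_zero _ hnm1)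
        have h1 : (n:ℝ) * A = (n₀:ℝ) * P + (n₁:ℝ) * Q := by
          apply mul_left_cancel₀ hc
          linear_combination ((n:ℝ) * n₁ * n₀ * ((n:ℝ)-1)^2) * hAk
        rw [hc₁]
        field_simp
        linear_combination -h1 - A * hsumR
      rw [hkey, mul_zero]
    exact crCov_zero n n₁ hn₁ _ _ _ hb hab
  · -- Part (b)
    rw [hVxx, hVwx, hvx, hγ, partb_core W hWs hWdet B₁ v]
    ring
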